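/- Assume MD, SCD*, the boundary assumptions, and that φ(b,t1) ≤ φ(b',t1) whenever b ⊆ b'. Suppose the union quantity condition holds: for all nonempty bundles b_1, b_2, t_{b_1∪b_2} ≤ max{t_{b_1}, t_{b_2}} (equivalently, the sold-alone quantity of b_1∪b_2 is at least the minimum of those of b_1 and b_2). Then: (i) the minimal optimal menu is a nested menu; and (ii) if b_1⋆,…,b_N⋆ (with N = 2^n − 1) enumerates all nonempty bundles so that t_{b_1⋆} ≤ t_{b_2⋆} ≤ ⋯ ≤ t_{b_N⋆}, then the nested menu {∅, b_1⋆, b_1⋆∪b_2⋆, …, b_1⋆∪⋯∪b_N⋆} is an optimal menu. -/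

import Mathlib

namespace Paper

abbrev Bundle (n : ℕ) := Finset (Fin n)

variable {n : ℕ}

/-- A stochastic bundle: nonnegative weights on bundles summing to one. -/
def IsStoch (a : Bundle n → ℝ) : Prop :=
  (∀ b, 0 ≤ a b) ∧ ∑ b, a b = 1

/-- The point mass at a bundle, viewed as a stochastic bundle. -/
def pt (b : Bundle n) : Bundle n → ℝ := fun b' => if b' = b then 1 else 0

/-- Virtual value of a stochastic bundle (linear extension). -/
def phiA (φ : Bundle n → ℝ → ℝ) (a : Bundle n → ℝ) (t : ℝ) : ℝ :=
  ∑ b, a b * φ b t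

/-- A function is single-crossing on a set: its sign is monotone there. -/
def SingleCrossingOn (g : ℝ → ℝ) (T : Set ℝ) : Prop :=
  MonotoneOn (fun t => Real.sign (g t)) T ∨ AntitoneOn (fun t => Real.sign (g t)) T

/-- Assumption SCD*: differences of virtual values of stochastic bundles are
single-crossing in the type. -/
def SCDstar (φ : Bundle n → ℝ → ℝ) (t0 t1 : ℝ) : Prop :=
  ∀ a a' : Bundle n → ℝ, IsStoch a → IsStoch a' →
    SingleCrossingOn (fun t => phiA φ a t - phiA φ a' t) (Set.Icc t0 t1)

/-- Assumption MD: differences of virtual values of deterministic bundles are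
monotone in the type. -/
def MD (φ : Bundle n → ℝ → ℝ) (t0 t1 : ℝ) : Prop :=
  ∀ b b' : Bundle n,
    MonotoneOn (fun t => φ b t - φ b' t) (Set.Icc t0 t1) ∨
    AntitoneOn (fun t => φ b t - φ b' t) (Set.Icc t0 t1)

/-- No two distinct bundles have identical virtual value functions on T. -/
def Distinct (φ : Bundle n → ℝ → ℝ) (t0 t1 : ℝ) : Prop :=
  ∀ b b' : Bundle n, b ≠ b' → ∃ t ∈ Set.Icc t0 t1, φ b t ≠ φ b' t

/-- A stochastic bundle is very weakly dominated. -/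
def VWD (φ : Bundle n → ℝ → ℝ) (t0 t1 : ℝ) (a : Bundle n → ℝ) : Prop :=
  ∃ a' : Bundle n → ℝ, IsStoch a' ∧ a' ≠ a ∧
    ∀ t ∈ Set.Icc t0 t1, phiA φ a t ≤ phiA φ a' t

/-- A bundle is a never strict best response. -/
def NeverStrictBR (φ : Bundle n → ℝ → ℝ) (t0 t1 : ℝ) (b : Bundle n) : Prop :=
  ∀ t ∈ Set.Icc t0 t1, ∃ b' : Bundle n, b' ≠ b ∧ φ b t ≤ φ b' t

/-- A menu is optimal if at every type some element attains the upper envelope. -/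
def OptimalMenu (φ : Bundle n → ℝ → ℝ) (t0 t1 : ℝ) (S : Finset (Bundle n)) : Prop :=
  ∀ t ∈ Set.Icc t0 t1, ∃ b ∈ S, ∀ b' : Bundle n, φ b' t ≤ φ b t

/-- A minimal optimal menu. -/
def MinimalOptimalMenu (φ : Bundle n → ℝ → ℝ) (t0 t1 : ℝ) (S : Finset (Bundle n)) : Prop :=
  OptimalMenu φ t0 t1 S ∧ ∀ S' : Finset (Bundle n), S' ⊂ S → ¬ OptimalMenu φ t0 t1 S'

/-- A nested menu: any two elements are comparable under set inclusion. -/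
def IsNestedMenu (S : Finset (Bundle n)) : Prop :=
  ∀ b1 ∈ S, ∀ b2 ∈ S, b1 ⊆ b2 ∨ b2 ⊆ b1

/-- A tree menu: a nonempty root contained in every nonempty element, and two
incomparable elements. -/
def IsTreeMenu (S : Finset (Bundle n)) : Prop :=
  (∃ r ∈ S, r ≠ (∅ : Bundle n) ∧ ∀ b ∈ S, b ≠ (∅ : Bundle n) → r ⊆ b) ∧
  (∃ b1 ∈ S, ∃ b2 ∈ S, ¬ b1 ⊆ b2 ∧ ¬ b2 ⊆ b1)



private def mk2 (p q : Bundle n) (α β : ℝ) : Bundle n → ℝ :=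
  fun b => (if b = p then α else 0) + (if b = q then β else 0)

private lemma mk2_stoch (p q : Bundle n) (α β : ℝ) (hα : 0 ≤ α) (hβ : 0 ≤ β)
    (h : α + β = 1) : IsStoch (mk2 p q α β) := by
  constructor
  · intro x
    have h1 : (0:ℝ) ≤ if x = p then α else 0 := by split_ifs <;> [exact hα; exact le_rfl]
    have h2 : (0:ℝ) ≤ if x = q then β else 0 := by split_ifs <;> [exact hβ; exact le_rfl]
    exact add_nonneg h1 h2
  · unfold mk2
    rw [Finset.sum_add_distrib,
      Finset.sum_ite_eq' Finset.univ p (fun _ => α),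
      Finset.sum_ite_eq' Finset.univ q (fun _ => β)]
    simp [h]

private lemma phiA_mk2 (φ : Bundle n → ℝ → ℝ) (p q : Bundle n) (α β : ℝ) (t : ℝ) :
    phiA φ (mk2 p q α β) t = α * φ p t + β * φ q t := by
  unfold phiA mk2
  simp only [add_mul, ite_mul, zero_mul]
  rw [Finset.sum_add_distrib,
    Finset.sum_ite_eq' Finset.univ p (fun b => α * φ b t),
    Finset.sum_ite_eq' Finset.univ q (fun b => β * φ b t)]
  simp

private lemma sign_nonneg' {x : ℝ} (h : 0 ≤ x) : 0 ≤ Real.sign x := by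
  rcases h.lt_or_eq with h' | h'
  · rw [Real.sign_of_pos h']; norm_num
  · rw [← h', Real.sign_zero]

private lemma sign_nonpos' {x : ℝ} (h : x ≤ 0) : Real.sign x ≤ 0 := by
  rcases h.lt_or_eq with h' | h'
  · rw [Real.sign_of_neg h']; norm_num
  · rw [h', Real.sign_zero]

private lemma sign_smul {k x : ℝ} (hk : 0 < k) : Real.sign (k * x) = Real.sign x := by
  rcases lt_trichotomy x 0 with h | h | h
  · rw [Real.sign_of_neg h, Real.sign_of_neg (mul_neg_of_pos_of_neg hk h)]
  · rw [h, mul_zero]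
  · rw [Real.sign_of_pos h, Real.sign_of_pos (mul_pos hk h)]

private lemma sc_congr {f g : ℝ → ℝ} {T : Set ℝ}
    (h : ∀ t ∈ T, Real.sign (f t) = Real.sign (g t)) :
    SingleCrossingOn f T → SingleCrossingOn g T := by
  rintro (hm | hm)
  · exact Or.inl fun x hx y hy hxy => by
      simp only [← h x hx, ← h y hy]; exact hm hx hy hxy
  · exact Or.inr fun x hx y hy hxy => by
      simp only [← h x hx, ← h y hy]; exact hm hx hy hxy

private lemma sc_combo' {t0 t1 : ℝ} {φ : Bundle n → ℝ → ℝ} (hscd : SCDstar φ t0 t1)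
    (p1 p2 q1 q2 : Bundle n) {a b c d : ℝ} (ha : 0 ≤ a) (hb : 0 ≤ b) (hc : 0 ≤ c)
    (hd : 0 ≤ d) (hsum : a + b = c + d) (hpos : 0 < a + b) :
    SingleCrossingOn
      (fun t => a * φ p1 t + b * φ p2 t - c * φ q1 t - d * φ q2 t) (Set.Icc t0 t1) := by
  have hsne : a + b ≠ 0 := ne_of_gt hpos
  have h1 := hscd (mk2 p1 p2 (a/(a+b)) (b/(a+b))) (mk2 q1 q2 (c/(a+b)) (d/(a+b)))
    (mk2_stoch _ _ _ _ (div_nonneg ha hpos.le) (div_nonneg hb hpos.le)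
      (by rw [← add_div, div_self hsne]))
    (mk2_stoch _ _ _ _ (div_nonneg hc hpos.le) (div_nonneg hd hpos.le)
      (by rw [← add_div, ← hsum, div_self hsne]))
  refine sc_congr (fun t _ => ?_) h1
  rw [phiA_mk2, phiA_mk2]
  have heq : a / (a+b) * φ p1 t + b / (a+b) * φ p2 t
      - (c / (a+b) * φ q1 t + d / (a+b) * φ q2 t)
      = (1/(a+b)) * (a * φ p1 t + b * φ p2 t - c * φ q1 t - d * φ q2 t) := by
    field_simp
    ring
  rw [heq, sign_smul (by positivity)]

private lemma sc_kill {f : ℝ → ℝ} {T : Set ℝ} (hsc : SingleCrossingOn f T) {p q r : ℝ}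
    (hp : p ∈ T) (hq : q ∈ T) (hr : r ∈ T) (hpq : p ≤ q) (hqr : q ≤ r)
    (h1 : 0 < f p) (h2 : f q ≤ 0) (h3 : 0 < f r) : False := by
  have hq' := sign_nonpos' h2
  rcases hsc with hm | hm
  · have := hm hp hq hpq
    dsimp only at this
    rw [Real.sign_of_pos h1] at this; linarith
  · have := hm hq hr hqr
    dsimp only at this
    rw [Real.sign_of_pos h3] at this; linarith

private lemma sc_kill' {f : ℝ → ℝ} {T : Set ℝ} (hsc : SingleCrossingOn f T) {p q r : ℝ}
    (hp : p ∈ T) (hq : q ∈ T) (hr : r ∈ T) (hpq : p ≤ q) (hqr : q ≤ r)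
    (h1 : f p < 0) (h2 : 0 < f q) (h3 : f r < 0) : False := by
  rcases hsc with hm | hm
  · have := hm hq hr hqr
    dsimp only at this
    rw [Real.sign_of_pos h2, Real.sign_of_neg h3] at this; linarith
  · have := hm hp hq hpq
    dsimp only at this
    rw [Real.sign_of_pos h2, Real.sign_of_neg h1] at this; linarith


section PhiLemmas

variable {t0 t1 : ℝ} {φ : Bundle n → ℝ → ℝ} {tz : Bundle n → ℝ}

private lemma phi_mono (ht : t0 < t1) (hmd : MD φ t0 t1)
    (hempty : ∀ t ∈ Set.Icc t0 t1, φ (∅ : Bundle n) t = 0)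
    (hneg : ∀ b : Bundle n, b ≠ ∅ → φ b t0 < 0)
    (hpos : ∀ b : Bundle n, b ≠ ∅ → 0 < φ b t1)
    (b : Bundle n) (hb : b ≠ ∅) : MonotoneOn (φ b) (Set.Icc t0 t1) := by
  have h0 : t0 ∈ Set.Icc t0 t1 := Set.left_mem_Icc.2 ht.le
  have h1 : t1 ∈ Set.Icc t0 t1 := Set.right_mem_Icc.2 ht.le
  rcases hmd b ∅ with hm | hm
  · intro x hx y hy hxy
    have h2 := hm hx hy hxy
    dsimp only at h2
    rw [hempty x hx, hempty y hy] at h2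
    linarith
  · exfalso
    have h2 := hm h0 h1 ht.le
    dsimp only at h2
    rw [hempty t0 h0, hempty t1 h1] at h2
    have := hneg b hb; have := hpos b hb
    linarith

private lemma phi_nonpos (ht : t0 < t1) (hmd : MD φ t0 t1)
    (hempty : ∀ t ∈ Set.Icc t0 t1, φ (∅ : Bundle n) t = 0)
    (hneg : ∀ b : Bundle n, b ≠ ∅ → φ b t0 < 0)
    (hpos : ∀ b : Bundle n, b ≠ ∅ → 0 < φ b t1)
    (htz_mem : ∀ b : Bundle n, b ≠ ∅ → tz b ∈ Set.Ioo t0 t1)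
    (htz_zero : ∀ b : Bundle n, b ≠ ∅ → φ b (tz b) = 0)
    (b : Bundle n) (hb : b ≠ ∅) {x : ℝ} (hx : x ∈ Set.Icc t0 t1) (hle : x ≤ tz b) :
    φ b x ≤ 0 := by
  have htzm : tz b ∈ Set.Icc t0 t1 := Set.Ioo_subset_Icc_self (htz_mem b hb)
  have := phi_mono ht hmd hempty hneg hpos b hb hx htzm hle
  rw [htz_zero b hb] at this
  exact this

private lemma phi_nonneg (ht : t0 < t1) (hmd : MD φ t0 t1)
    (hempty : ∀ t ∈ Set.Icc t0 t1, φ (∅ : Bundle n) t = 0)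
    (hneg : ∀ b : Bundle n, b ≠ ∅ → φ b t0 < 0)
    (hpos : ∀ b : Bundle n, b ≠ ∅ → 0 < φ b t1)
    (htz_mem : ∀ b : Bundle n, b ≠ ∅ → tz b ∈ Set.Ioo t0 t1)
    (htz_zero : ∀ b : Bundle n, b ≠ ∅ → φ b (tz b) = 0)
    (b : Bundle n) (hb : b ≠ ∅) {x : ℝ} (hx : x ∈ Set.Icc t0 t1) (hge : tz b ≤ x) :
    0 ≤ φ b x := by
  have htzm : tz b ∈ Set.Icc t0 t1 := Set.Ioo_subset_Icc_self (htz_mem b hb)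
  have := phi_mono ht hmd hempty hneg hpos b hb htzm hx hge
  rw [htz_zero b hb] at this
  exact this

private lemma phi_pos' (ht : t0 < t1) (hmd : MD φ t0 t1)
    (hempty : ∀ t ∈ Set.Icc t0 t1, φ (∅ : Bundle n) t = 0)
    (hneg : ∀ b : Bundle n, b ≠ ∅ → φ b t0 < 0)
    (hpos : ∀ b : Bundle n, b ≠ ∅ → 0 < φ b t1)
    (htz_mem : ∀ b : Bundle n, b ≠ ∅ → tz b ∈ Set.Ioo t0 t1)
    (htz_zero : ∀ b : Bundle n, b ≠ ∅ → φ b (tz b) = 0)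
    (htz_uniq : ∀ b : Bundle n, b ≠ ∅ → ∀ s ∈ Set.Icc t0 t1, φ b s = 0 → s = tz b)
    (b : Bundle n) (hb : b ≠ ∅) {x : ℝ} (hx : x ∈ Set.Icc t0 t1) (hgt : tz b < x) :
    0 < φ b x := by
  have h1 := phi_nonneg ht hmd hempty hneg hpos htz_mem htz_zero b hb hx hgt.le
  rcases h1.lt_or_eq with h | h
  · exact h
  · exact absurd (htz_uniq b hb x hx h.symm) hgt.ne'

private lemma dom (ht : t0 < t1) (hmd : MD φ t0 t1)
    (hempty : ∀ t ∈ Set.Icc t0 t1, φ (∅ : Bundle n) t = 0)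
    (hneg : ∀ b : Bundle n, b ≠ ∅ → φ b t0 < 0)
    (hpos : ∀ b : Bundle n, b ≠ ∅ → 0 < φ b t1)
    (htz_mem : ∀ b : Bundle n, b ≠ ∅ → tz b ∈ Set.Ioo t0 t1)
    (htz_zero : ∀ b : Bundle n, b ≠ ∅ → φ b (tz b) = 0)
    (hmono : ∀ b b' : Bundle n, b ⊆ b' → φ b t1 ≤ φ b' t1)
    {b B : Bundle n} (hb : b ≠ ∅) (hB : B ≠ ∅) (hsub : b ⊆ B) (htzle : tz B ≤ tz b)
    {t : ℝ} (htm : t ∈ Set.Icc t0 t1) (hge : tz b ≤ t) : φ b t ≤ φ B t := by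
  have htzbm : tz b ∈ Set.Icc t0 t1 := Set.Ioo_subset_Icc_self (htz_mem b hb)
  rcases hmd B b with hm | hm
  · have h1 := hm htzbm htm hge
    dsimp only at h1
    have h2 : 0 ≤ φ B (tz b) := phi_nonneg ht hmd hempty hneg hpos htz_mem htz_zero B hB htzbm htzle
    have h3 := htz_zero b hb
    linarith
  · have h1 := hm htm (Set.right_mem_Icc.2 ht.le) htm.2
    dsimp only at h1
    have h2 := hmono b B hsub
    linarith

private lemma empty_mem (ht : t0 < t1)
    (hempty : ∀ t ∈ Set.Icc t0 t1, φ (∅ : Bundle n) t = 0)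
    (hneg : ∀ b : Bundle n, b ≠ ∅ → φ b t0 < 0)
    {S : Finset (Bundle n)} (hopt : OptimalMenu φ t0 t1 S) : (∅ : Bundle n) ∈ S := by
  obtain ⟨b, hbS, hbtop⟩ := hopt t0 (Set.left_mem_Icc.2 ht.le)
  rcases eq_or_ne b ∅ with rfl | hbne
  · exact hbS
  · exfalso
    have h1 := hbtop (∅ : Bundle n)
    rw [hempty t0 (Set.left_mem_Icc.2 ht.le)] at h1
    exact absurd (hneg b hbne) (not_lt.2 h1)

private lemma needed {S : Finset (Bundle n)} (hS : MinimalOptimalMenu φ t0 t1 S)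
    {b : Bundle n} (hbS : b ∈ S) :
    ∃ s ∈ Set.Icc t0 t1, (∀ b', φ b' s ≤ φ b s) ∧ ∀ c ∈ S, c ≠ b → φ c s < φ b s := by
  have hnot := hS.2 (S.erase b) (Finset.erase_ssubset hbS)
  rw [OptimalMenu] at hnot
  push_neg at hnot
  obtain ⟨s, hsm, hfail⟩ := hnot
  obtain ⟨bm, hbmS, hbmtop⟩ := hS.1 s hsm
  have hbmb : bm = b := by
    by_contra hne
    obtain ⟨c', hc'⟩ := hfail bm (Finset.mem_erase.2 ⟨hne, hbmS⟩)
    exact absurd (hbmtop c') (not_le.2 hc')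
  subst hbmb
  refine ⟨s, hsm, hbmtop, ?_⟩
  intro c hcS hcne
  obtain ⟨c', hc'⟩ := hfail c (Finset.mem_erase.2 ⟨hcne, hcS⟩)
  exact lt_of_lt_of_le hc' (hbmtop c')


end PhiLemmas

set_option maxHeartbeats 3000000 in
private lemma core {t0 t1 : ℝ} {φ : Bundle n → ℝ → ℝ} {tz : Bundle n → ℝ}
    (ht : t0 < t1)
    (hcont : ∀ b : Bundle n, ContinuousOn (φ b) (Set.Icc t0 t1))
    (hdist : Distinct φ t0 t1)
    (hmd : MD φ t0 t1)
    (hscd : SCDstar φ t0 t1)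
    (hempty : ∀ t ∈ Set.Icc t0 t1, φ (∅ : Bundle n) t = 0)
    (hneg : ∀ b : Bundle n, b ≠ ∅ → φ b t0 < 0)
    (hpos : ∀ b : Bundle n, b ≠ ∅ → 0 < φ b t1)
    (htz_mem : ∀ b : Bundle n, b ≠ ∅ → tz b ∈ Set.Ioo t0 t1)
    (htz_zero : ∀ b : Bundle n, b ≠ ∅ → φ b (tz b) = 0)
    (htz_uniq : ∀ b : Bundle n, b ≠ ∅ → ∀ s ∈ Set.Icc t0 t1, φ b s = 0 → s = tz b)
    (hmono : ∀ b b' : Bundle n, b ⊆ b' → φ b t1 ≤ φ b' t1)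
    (hunion : ∀ b1 b2 : Bundle n, b1 ≠ ∅ → b2 ≠ ∅ →
      tz (b1 ∪ b2) ≤ max (tz b1) (tz b2))
    {S : Finset (Bundle n)} (hS : MinimalOptimalMenu φ t0 t1 S)
    {b1 b2 : Bundle n} (hb1S : b1 ∈ S) (hb2S : b2 ∈ S)
    (h12 : ¬ b1 ⊆ b2) (h21 : ¬ b2 ⊆ b1) (htzle : tz b1 ≤ tz b2) : False := by
  have hb1ne : b1 ≠ (∅ : Bundle n) := by rintro rfl; exact h12 (Finset.empty_subset _)
  have hb2ne : b2 ≠ (∅ : Bundle n) := by rintro rfl; exact h21 (Finset.empty_subset _)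
  have hb21ne : b2 ≠ b1 := by rintro rfl; exact h12 (subset_refl _)
  have hune : b1 ∪ b2 ≠ (∅ : Bundle n) := by
    intro h; rw [Finset.union_eq_empty] at h; exact hb1ne h.1
  have hub2 : b1 ∪ b2 ≠ b2 := by
    intro h; exact h12 (h ▸ Finset.subset_union_left)
  have hb2u : b2 ⊆ b1 ∪ b2 := Finset.subset_union_right
  have hmem0 : t0 ∈ Set.Icc t0 t1 := Set.left_mem_Icc.2 ht.le
  have hmem1 : t1 ∈ Set.Icc t0 t1 := Set.right_mem_Icc.2 ht.le
  have htz1m : tz b1 ∈ Set.Icc t0 t1 := Set.Ioo_subset_Icc_self (htz_mem b1 hb1ne)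
  have htz2m : tz b2 ∈ Set.Icc t0 t1 := Set.Ioo_subset_Icc_self (htz_mem b2 hb2ne)
  have htzu2 : tz (b1 ∪ b2) ≤ tz b2 := by
    have h := hunion b1 b2 hb1ne hb2ne
    rwa [max_eq_right htzle] at h
  obtain ⟨s1, hs1m, hs1top, hs1str⟩ := needed hS hb1S
  obtain ⟨s2, hs2m, hs2top, hs2str⟩ := needed hS hb2S
  have hSempty : (∅ : Bundle n) ∈ S := empty_mem ht hempty hneg hS.1
  have hD1 : φ b2 s1 < φ b1 s1 := hs1str b2 hb2S hb21ne
  have hD2 : φ b1 s2 < φ b2 s2 := hs2str b1 hb1S (Ne.symm hb21ne)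
  have hpos1 : 0 < φ b1 s1 := by
    have h := hs1str ∅ hSempty (Ne.symm hb1ne)
    rwa [hempty s1 hs1m] at h
  have hpos2 : 0 < φ b2 s2 := by
    have h := hs2str ∅ hSempty (Ne.symm hb2ne)
    rwa [hempty s2 hs2m] at h
  have hs1gt : tz b1 < s1 := by
    by_contra h; push_neg at h
    exact absurd (phi_nonpos ht hmd hempty hneg hpos htz_mem htz_zero b1 hb1ne hs1m h)
      (not_le.2 hpos1)
  have hs2gt : tz b2 < s2 := by
    by_contra h; push_neg at h
    exact absurd (phi_nonpos ht hmd hempty hneg hpos htz_mem htz_zero b2 hb2ne hs2m h)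
      (not_le.2 hpos2)
  -- single crossing of D = φ b1 - φ b2
  have hDsc : SingleCrossingOn (fun t => φ b1 t - φ b2 t) (Set.Icc t0 t1) := by
    have h := sc_combo' hscd b1 b1 b2 b2 (a := 1) (b := 0) (c := 1) (d := 0)
      zero_le_one le_rfl zero_le_one le_rfl (by ring) (by norm_num)
    exact sc_congr (fun t _ => by norm_num) h
  -- the sign of D is antitone
  have hanti : AntitoneOn (fun t => Real.sign (φ b1 t - φ b2 t)) (Set.Icc t0 t1) := by
    rcases hDsc with hm | hm
    · exfalso
      have h1 : tz b1 ≤ s2 := le_trans htzle hs2gt.le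
      have h2 := hm htz1m hs2m h1
      dsimp only at h2
      have hv : 0 ≤ φ b1 (tz b1) - φ b2 (tz b1) := by
        have ha := phi_nonpos ht hmd hempty hneg hpos htz_mem htz_zero b2 hb2ne htz1m htzle
        have hb := htz_zero b1 hb1ne
        linarith
      have hs := sign_nonneg' hv
      rw [Real.sign_of_neg (by linarith : φ b1 s2 - φ b2 s2 < 0)] at h2
      linarith
    · exact hm
  have hs12 : s1 ≤ s2 := by
    by_contra hlt; push_neg at hlt
    have h := hanti hs2m hs1m hlt.le
    dsimp only at h
    rw [Real.sign_of_pos (by linarith : 0 < φ b1 s1 - φ b2 s1),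
        Real.sign_of_neg (by linarith : φ b1 s2 - φ b2 s2 < 0)] at h
    linarith
  -- D at tz b2 is positive
  have hDtz2 : 0 < φ b1 (tz b2) - φ b2 (tz b2) := by
    by_contra hcon; push_neg at hcon
    have hz2 : φ b2 (tz b2) = 0 := htz_zero b2 hb2ne
    have h1 : φ b1 (tz b2) ≤ 0 := by linarith
    have h2 : tz b2 ≤ tz b1 := by
      by_contra h3; push_neg at h3
      exact absurd (phi_pos' ht hmd hempty hneg hpos htz_mem htz_zero htz_uniq b1 hb1ne htz2m h3)
        (not_lt.2 h1)
    have h4 : tz b1 = tz b2 := le_antisymm htzle h2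
    have h5 : φ b1 (tz b2) = 0 := by rw [← h4]; exact htz_zero b1 hb1ne
    have h6 := hanti htz2m hs1m (by rw [← h4]; exact hs1gt.le)
    dsimp only at h6
    rw [Real.sign_of_pos (by linarith : 0 < φ b1 s1 - φ b2 s1)] at h6
    rw [show Real.sign (φ b1 (tz b2) - φ b2 (tz b2)) = 0 by
      rw [h5, hz2]; simp] at h6
    linarith
  have hA : 0 < φ b1 (tz b2) := by
    have := htz_zero b2 hb2ne; linarith
  -- D at t1 is negative
  have hDt1 : φ b1 t1 - φ b2 t1 < 0 := by
    have h6 := hanti hs2m hmem1 hs2m.2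
    dsimp only at h6
    rw [Real.sign_of_neg (by linarith : φ b1 s2 - φ b2 s2 < 0)] at h6
    by_contra h; push_neg at h
    have := sign_nonneg' h; linarith
  -- facts about G = φ (b1 ∪ b2) - φ b2
  have hGsc : SingleCrossingOn (fun t => φ (b1 ∪ b2) t - φ b2 t) (Set.Icc t0 t1) := by
    have h := sc_combo' hscd (b1 ∪ b2) (b1 ∪ b2) b2 b2 (a := 1) (b := 0) (c := 1) (d := 0)
      zero_le_one le_rfl zero_le_one le_rfl (by ring) (by norm_num)
    exact sc_congr (fun t _ => by norm_num) h
  have hGtz2 : 0 ≤ φ (b1 ∪ b2) (tz b2) - φ b2 (tz b2) := by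
    have h1 : 0 ≤ φ (b1 ∪ b2) (tz b2) :=
      phi_nonneg ht hmd hempty hneg hpos htz_mem htz_zero (b1 ∪ b2) hune htz2m htzu2
    have h2 := htz_zero b2 hb2ne; linarith
  have hGs2le : φ (b1 ∪ b2) s2 - φ b2 s2 ≤ 0 := by
    have := hs2top (b1 ∪ b2); linarith
  have hGt1ge : 0 ≤ φ (b1 ∪ b2) t1 - φ b2 t1 := by
    have := hmono b2 (b1 ∪ b2) hb2u; linarith
  have hGs2 : φ (b1 ∪ b2) s2 - φ b2 s2 = 0 := by
    rcases hGs2le.lt_or_eq with h | h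
    · exfalso
      rcases hGsc with hm | hm
      · have h2 := hm htz2m hs2m hs2gt.le
        dsimp only at h2
        rw [Real.sign_of_neg h] at h2
        have := sign_nonneg' hGtz2
        linarith
      · have h2 := hm hs2m hmem1 hs2m.2
        dsimp only at h2
        rw [Real.sign_of_neg h] at h2
        have := sign_nonneg' hGt1ge
        linarith
    · exact h
  -- G at t1 vanishes
  have hGt1 : φ (b1 ∪ b2) t1 - φ b2 t1 = 0 := by
    rcases hGt1ge.lt_or_eq with h | h
    swap
    · exact h.symm
    exfalso
    have hB : 0 < φ b2 t1 - φ b1 t1 := by linarith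
    set ε : ℝ := (φ (b1 ∪ b2) t1 - φ b2 t1) / (2 * (φ b2 t1 - φ b1 t1)) with hε
    have hεpos : 0 < ε := div_pos h (by linarith)
    have hkey : ε * (φ b2 t1 - φ b1 t1) = (φ (b1 ∪ b2) t1 - φ b2 t1) / 2 := by
      rw [hε]; field_simp
    clear_value ε
    have hsc2 := sc_combo' hscd b1 (b1 ∪ b2) b2 b2 (a := ε) (b := 1) (c := 1) (d := ε)
      hεpos.le zero_le_one zero_le_one hεpos.le (by ring) (by linarith)
    refine sc_kill hsc2 htz2m hs2m hmem1 hs2gt.le hs2m.2 ?_ ?_ ?_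
    · show 0 < ε * φ b1 (tz b2) + 1 * φ (b1 ∪ b2) (tz b2) - 1 * φ b2 (tz b2) - ε * φ b2 (tz b2)
      have hz2 : φ b2 (tz b2) = 0 := htz_zero b2 hb2ne
      have hεA := mul_pos hεpos hA
      have hεC : ε * φ b2 (tz b2) = 0 := by rw [hz2]; ring
      linarith [hGtz2]
    · show ε * φ b1 s2 + 1 * φ (b1 ∪ b2) s2 - 1 * φ b2 s2 - ε * φ b2 s2 ≤ 0
      have hεD := mul_pos hεpos (sub_pos.2 hD2)
      nlinarith [hGs2]
    · show 0 < ε * φ b1 t1 + 1 * φ (b1 ∪ b2) t1 - 1 * φ b2 t1 - ε * φ b2 t1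
      nlinarith [hkey, h]
  -- G is nonnegative on [tz b2, t1]
  have hGge : ∀ x ∈ Set.Icc t0 t1, tz b2 ≤ x → 0 ≤ φ (b1 ∪ b2) x - φ b2 x := by
    intro x hx hxx
    by_contra hcon; push_neg at hcon
    rcases hGsc with hm | hm
    · have h2 := hm htz2m hx hxx
      dsimp only at h2
      rw [Real.sign_of_neg hcon] at h2
      have := sign_nonneg' hGtz2
      linarith
    · have h2 := hm hx hmem1 hx.2
      dsimp only at h2
      rw [Real.sign_of_neg hcon,
        show Real.sign (φ (b1 ∪ b2) t1 - φ b2 t1) = 0 by rw [hGt1]; simp] at h2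
      linarith
  -- G vanishes on [s2, t1]
  have hGz : ∀ x ∈ Set.Icc t0 t1, s2 ≤ x → φ (b1 ∪ b2) x - φ b2 x = 0 := by
    intro x hx hxx
    have hge := hGge x hx (le_trans hs2gt.le hxx)
    rcases hge.lt_or_eq with h | h
    swap
    · exact h.symm
    exfalso
    rcases hGsc with hm | hm
    · have h2 := hm hx hmem1 hx.2
      dsimp only at h2
      rw [Real.sign_of_pos h,
        show Real.sign (φ (b1 ∪ b2) t1 - φ b2 t1) = 0 by rw [hGt1]; simp] at h2
      linarith
    · have h2 := hm hs2m hx hxx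
      dsimp only at h2
      rw [Real.sign_of_pos h,
        show Real.sign (φ (b1 ∪ b2) s2 - φ b2 s2) = 0 by rw [hGs2]; simp] at h2
      linarith
  -- a point where G does not vanish
  obtain ⟨tee, hteem, htee⟩ := hdist (b1 ∪ b2) b2 hub2
  have hGtee : φ (b1 ∪ b2) tee - φ b2 tee ≠ 0 := sub_ne_zero.2 htee
  have hteelt : tee < s2 := by
    by_contra hcon; push_neg at hcon
    exact hGtee (hGz tee hteem hcon)
  rcases hGtee.lt_or_gt with hN | hP
  · -- CASE N : G tee < 0, so tee < tz b2
    have hteetz : tee < tz b2 := by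
      by_contra hcon; push_neg at hcon
      exact absurd (hGge tee hteem hcon) (not_le.2 hN)
    have hden : (0:ℝ) < |φ b1 tee - φ b2 tee| + 1 := by positivity
    set ε : ℝ := (-(φ (b1 ∪ b2) tee - φ b2 tee)) / (2 * (|φ b1 tee - φ b2 tee| + 1)) with hε
    have hεpos : 0 < ε := div_pos (by linarith) (by linarith)
    have hkey : ε * (|φ b1 tee - φ b2 tee| + 1) = (-(φ (b1 ∪ b2) tee - φ b2 tee)) / 2 := by
      rw [hε]; field_simp
    clear_value ε
    have hsc2 := sc_combo' hscd b1 (b1 ∪ b2) b2 b2 (a := ε) (b := 1) (c := 1) (d := ε)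
      hεpos.le zero_le_one zero_le_one hεpos.le (by ring) (by linarith)
    refine sc_kill' hsc2 hteem htz2m hs2m hteetz.le hs2gt.le ?_ ?_ ?_
    · show ε * φ b1 tee + 1 * φ (b1 ∪ b2) tee - 1 * φ b2 tee - ε * φ b2 tee < 0
      have h1 : ε * (φ b1 tee - φ b2 tee) ≤ ε * |φ b1 tee - φ b2 tee| :=
        mul_le_mul_of_nonneg_left (le_abs_self _) hεpos.le
      nlinarith [hkey, hN, hεpos]
    · show 0 < ε * φ b1 (tz b2) + 1 * φ (b1 ∪ b2) (tz b2) - 1 * φ b2 (tz b2) - ε * φ b2 (tz b2)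
      have hz2 : φ b2 (tz b2) = 0 := htz_zero b2 hb2ne
      have hεA := mul_pos hεpos hA
      have hεC : ε * φ b2 (tz b2) = 0 := by rw [hz2]; ring
      linarith [hGtz2]
    · show ε * φ b1 s2 + 1 * φ (b1 ∪ b2) s2 - 1 * φ b2 s2 - ε * φ b2 s2 < 0
      have hεD := mul_pos hεpos (sub_pos.2 hD2)
      nlinarith [hGs2]
  · -- CASE P : G tee > 0
    -- the first zero τ of G
    have hKclosed : IsClosed (Set.Icc t0 t1 ∩ (fun t => φ (b1 ∪ b2) t - φ b2 t) ⁻¹' {0}) :=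
      ContinuousOn.preimage_isClosed_of_isClosed ((hcont (b1 ∪ b2)).sub (hcont b2))
        isClosed_Icc isClosed_singleton
    have hKcompact : IsCompact (Set.Icc t0 t1 ∩ (fun t => φ (b1 ∪ b2) t - φ b2 t) ⁻¹' {0}) :=
      IsCompact.of_isClosed_subset isCompact_Icc hKclosed Set.inter_subset_left
    have hKne : (Set.Icc t0 t1 ∩ (fun t => φ (b1 ∪ b2) t - φ b2 t) ⁻¹' {0}).Nonempty :=
      ⟨s2, hs2m, by simpa using hGs2⟩
    obtain ⟨τ, hτK, hτinf⟩ :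
        ∃ τ, τ ∈ Set.Icc t0 t1 ∩ (fun t => φ (b1 ∪ b2) t - φ b2 t) ⁻¹' {0} ∧
          ∀ x ∈ Set.Icc t0 t1 ∩ (fun t => φ (b1 ∪ b2) t - φ b2 t) ⁻¹' {0}, τ ≤ x :=
      ⟨sInf (Set.Icc t0 t1 ∩ (fun t => φ (b1 ∪ b2) t - φ b2 t) ⁻¹' {0}),
        hKcompact.sInf_mem hKne, fun x hx => csInf_le hKcompact.bddBelow hx⟩
    have hτm : τ ∈ Set.Icc t0 t1 := hτK.1
    have hτz : φ (b1 ∪ b2) τ - φ b2 τ = 0 := by simpa using hτK.2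
    have hτs2 : τ ≤ s2 := hτinf s2 ⟨hs2m, by simpa using hGs2⟩
    -- G vanishes on [τ, t1]
    have hGzτ : ∀ x ∈ Set.Icc t0 t1, τ ≤ x → φ (b1 ∪ b2) x - φ b2 x = 0 := by
      intro x hx hxx
      rcases le_or_gt s2 x with hc | hc
      · exact hGz x hx hc
      rcases lt_trichotomy (φ (b1 ∪ b2) x - φ b2 x) 0 with h | h | h
      · exfalso
        rcases hGsc with hm | hm
        · have h2 := hm hτm hx hxx
          dsimp only at h2
          rw [Real.sign_of_neg h,
            show Real.sign (φ (b1 ∪ b2) τ - φ b2 τ) = 0 by rw [hτz]; simp] at h2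
          linarith
        · have h2 := hm hx hs2m hc.le
          dsimp only at h2
          rw [Real.sign_of_neg h,
            show Real.sign (φ (b1 ∪ b2) s2 - φ b2 s2) = 0 by rw [hGs2]; simp] at h2
          linarith
      · exact h
      · exfalso
        rcases hGsc with hm | hm
        · have h2 := hm hx hs2m hc.le
          dsimp only at h2
          rw [Real.sign_of_pos h,
            show Real.sign (φ (b1 ∪ b2) s2 - φ b2 s2) = 0 by rw [hGs2]; simp] at h2
          linarith
        · have h2 := hm hτm hx hxx
          dsimp only at h2
          rw [Real.sign_of_pos h,
            show Real.sign (φ (b1 ∪ b2) τ - φ b2 τ) = 0 by rw [hτz]; simp] at h2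
          linarith
    -- G is positive strictly before τ
    have hGpos : ∀ x ∈ Set.Icc t0 t1, x < τ → 0 < φ (b1 ∪ b2) x - φ b2 x := by
      intro x hx hxτ
      have hne0 : φ (b1 ∪ b2) x - φ b2 x ≠ 0 := by
        intro h0
        have : τ ≤ x := hτinf x ⟨hx, by simpa using h0⟩
        linarith
      rcases hne0.lt_or_gt with h | h
      · exfalso
        rcases hGsc with hm | hm
        · have h2 := hm hteem hs2m hteelt.le
          dsimp only at h2
          rw [Real.sign_of_pos hP,
            show Real.sign (φ (b1 ∪ b2) s2 - φ b2 s2) = 0 by rw [hGs2]; simp] at h2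
          linarith
        · have h2 := hm hx hs2m (by linarith : x ≤ s2)
          dsimp only at h2
          rw [Real.sign_of_neg h,
            show Real.sign (φ (b1 ∪ b2) s2 - φ b2 s2) = 0 by rw [hGs2]; simp] at h2
          linarith
      · exact h
    have hteeτ : tee < τ := by
      by_contra hcon; push_neg at hcon
      exact absurd (hGzτ tee hteem hcon) hP.ne'
    have hτt0 : t0 < τ := lt_of_le_of_lt hteem.1 hteeτ
    -- the approximating sequence
    have htkprop : ∀ k : ℕ, (τ - (τ - t0) / (k + 2) ∈ Set.Icc t0 t1) ∧ τ - (τ - t0) / (k + 2) < τ := by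
      intro k
      have hk2 : (0:ℝ) < (k:ℝ) + 2 := by positivity
      have h1 : 0 < (τ - t0) / ((k:ℝ) + 2) := div_pos (by linarith) hk2
      have h2 : (τ - t0) / ((k:ℝ) + 2) ≤ τ - t0 := by
        rw [div_le_iff₀ hk2]
        nlinarith [(by linarith : (0:ℝ) ≤ τ - t0)]
      refine ⟨⟨by linarith, ?_⟩, by linarith⟩
      have : τ ≤ t1 := hτm.2
      linarith
    have hattain : ∀ k : ℕ, ∃ b ∈ S, ∀ b', φ b' (τ - (τ - t0) / (k + 2)) ≤ φ b (τ - (τ - t0) / (k + 2)) :=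
      fun k => hS.1 _ (htkprop k).1
    choose f hfS hftop using hattain
    obtain ⟨c, hcfiber⟩ := Finite.exists_infinite_fiber f
    have hcinf : (f ⁻¹' {c}).Infinite := Set.infinite_coe_iff.mp hcfiber
    obtain ⟨k0, hk0⟩ := hcinf.nonempty
    have hk0c : f k0 = c := hk0
    have hcS : c ∈ S := hk0c ▸ hfS k0
    have hEk : ∀ k : ℕ, f k = c →
        0 < φ c (τ - (τ - t0) / (k + 2)) - φ b2 (τ - (τ - t0) / (k + 2)) := by
      intro k hk
      have h1 := hftop k (b1 ∪ b2)
      have h2 := hGpos _ (htkprop k).1 (htkprop k).2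
      rw [hk] at h1
      linarith
    have hcb2 : c ≠ b2 := by
      intro h
      have h2 := hEk k0 hk0c
      rw [h] at h2; linarith
    have hEs2 : φ c s2 - φ b2 s2 < 0 := by
      have := hs2str c hcS hcb2; linarith
    have hEsc : SingleCrossingOn (fun t => φ c t - φ b2 t) (Set.Icc t0 t1) := by
      have h := sc_combo' hscd c c b2 b2 (a := 1) (b := 0) (c := 1) (d := 0)
        zero_le_one le_rfl zero_le_one le_rfl (by ring) (by norm_num)
      exact sc_congr (fun t _ => by norm_num) h
    have hEt1 : φ c t1 - φ b2 t1 < 0 := by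
      rcases hEsc with hm | hm
      · exfalso
        have h2 := hm (htkprop k0).1 hs2m (by linarith [(htkprop k0).2, hτs2])
        dsimp only at h2
        rw [Real.sign_of_pos (hEk k0 hk0c), Real.sign_of_neg hEs2] at h2
        linarith
      · have h2 := hm hs2m hmem1 hs2m.2
        dsimp only at h2
        rw [Real.sign_of_neg hEs2] at h2
        by_contra hcon; push_neg at hcon
        have := sign_nonneg' hcon
        linarith
    -- the merge point m
    have hmIcc : max τ (tz b2) ∈ Set.Icc t0 t1 :=
      ⟨le_trans hτm.1 (le_max_left _ _), max_le hτm.2 htz2m.2⟩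
    have hms2 : max τ (tz b2) ≤ s2 := max_le hτs2 hs2gt.le
    have hGm : φ (b1 ∪ b2) (max τ (tz b2)) - φ b2 (max τ (tz b2)) = 0 :=
      hGzτ _ hmIcc (le_max_left _ _)
    have hφb2m : 0 ≤ φ b2 (max τ (tz b2)) :=
      phi_nonneg ht hmd hempty hneg hpos htz_mem htz_zero b2 hb2ne hmIcc (le_max_right _ _)
    have hGtk : 0 < φ (b1 ∪ b2) (τ - (τ - t0) / (k0 + 2)) - φ b2 (τ - (τ - t0) / (k0 + 2)) :=
      hGpos _ (htkprop k0).1 (htkprop k0).2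
    have hEtk : 0 < φ c (τ - (τ - t0) / (k0 + 2)) - φ b2 (τ - (τ - t0) / (k0 + 2)) :=
      hEk k0 hk0c
    have hp0Icc : τ - (τ - t0) / (k0 + 2) ∈ Set.Icc t0 t1 := (htkprop k0).1
    have hp0lt : τ - (τ - t0) / (k0 + 2) < τ := (htkprop k0).2
    set p0 : ℝ := τ - (τ - t0) / (k0 + 2) with hp0
    clear_value p0
    rcases le_or_gt 0 (φ c (max τ (tz b2)) - φ b2 (max τ (tz b2))) with hEm | hEm
    · -- BRANCH X : E (max τ (tz b2)) ≥ 0, find a zero σ of E in [m, s2]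
      have hcontE : ContinuousOn (fun t => φ c t - φ b2 t) (Set.Icc (max τ (tz b2)) s2) :=
        ((hcont c).sub (hcont b2)).mono (Set.Icc_subset_Icc hmIcc.1 hs2m.2)
      obtain ⟨σ, hσ, hEσ⟩ := intermediate_value_Icc' hms2 hcontE ⟨hEs2.le, hEm⟩
      have hσIcc : σ ∈ Set.Icc t0 t1 := ⟨le_trans hmIcc.1 hσ.1, le_trans hσ.2 hs2m.2⟩
      have hGσ : φ (b1 ∪ b2) σ - φ b2 σ = 0 :=
        hGzτ σ hσIcc (le_trans (le_max_left _ _) hσ.1)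
      have hφb2σ : 0 ≤ φ b2 σ :=
        phi_nonneg ht hmd hempty hneg hpos htz_mem htz_zero b2 hb2ne hσIcc
          (le_trans (le_max_right _ _) hσ.1)
      have hEσ' : φ c σ - φ b2 σ = 0 := hEσ
      have hφb2t1 : 0 < φ b2 t1 := hpos b2 hb2ne
      set w : ℝ := min (1/2) ((-(φ c t1 - φ b2 t1)) / (2 * φ b2 t1)) with hww
      have hwpos : 0 < w := lt_min (by norm_num) (div_pos (by linarith) (by linarith))
      have hwle : w * φ b2 t1 ≤ (-(φ c t1 - φ b2 t1)) / 2 := by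
        have h1 : w ≤ (-(φ c t1 - φ b2 t1)) / (2 * φ b2 t1) := min_le_right _ _
        rw [le_div_iff₀ (by linarith : (0:ℝ) < 2 * φ b2 t1)] at h1
        linarith
      clear_value w
      set z : ℝ := max 2 (((φ c p0 - φ b2 p0)
          + w * |φ b2 p0| + 1)
          / (φ (b1 ∪ b2) p0 - φ b2 p0)) with hzz
      have hz2' : (2:ℝ) ≤ z := le_max_left _ _
      have hzpos : 0 < z := by linarith
      have hzkey : (φ c p0 - φ b2 p0)
          + w * |φ b2 p0| + 1
          ≤ z * (φ (b1 ∪ b2) p0 - φ b2 p0) := by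
        have h1 := le_max_right 2 (((φ c p0 - φ b2 p0)
          + w * |φ b2 p0| + 1)
          / (φ (b1 ∪ b2) p0 - φ b2 p0))
        rw [div_le_iff₀ hGtk] at h1
        rw [← hzz] at h1
        nlinarith [h1]
      clear_value z
      have hsc2 := sc_combo' hscd (b1 ∪ b2) ∅ c b2 (a := z) (b := w) (c := 1) (d := z + w - 1)
        hzpos.le hwpos.le zero_le_one (by linarith) (by ring) (by linarith)
      refine sc_kill hsc2 hp0Icc hσIcc hmem1
        (le_trans hp0lt.le (le_trans (le_max_left _ _) hσ.1)) hσIcc.2 ?_ ?_ ?_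
      · show 0 < z * φ (b1 ∪ b2) p0 + w * φ (∅:Bundle n) p0
            - 1 * φ c p0 - (z + w - 1) * φ b2 p0
        have h0 : w * φ (∅:Bundle n) p0 = 0 := by
          rw [hempty _ hp0Icc]; ring
        have habs : w * φ b2 p0 ≤ w * |φ b2 p0| :=
          mul_le_mul_of_nonneg_left (le_abs_self _) hwpos.le
        nlinarith [hzkey]
      · show z * φ (b1 ∪ b2) σ + w * φ (∅:Bundle n) σ - 1 * φ c σ - (z + w - 1) * φ b2 σ ≤ 0
        have h0 : w * φ (∅:Bundle n) σ = 0 := by rw [hempty _ hσIcc]; ring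
        have h1 : z * (φ (b1 ∪ b2) σ - φ b2 σ) = 0 := by rw [hGσ]; ring
        have h2 := mul_nonneg hwpos.le hφb2σ
        nlinarith [hEσ']
      · show 0 < z * φ (b1 ∪ b2) t1 + w * φ (∅:Bundle n) t1 - 1 * φ c t1 - (z + w - 1) * φ b2 t1
        have h0 : w * φ (∅:Bundle n) t1 = 0 := by rw [hempty _ hmem1]; ring
        have h1 : z * (φ (b1 ∪ b2) t1 - φ b2 t1) = 0 := by rw [hGt1]; ring
        nlinarith [hwle, hEt1]
    · -- BRANCH Y : E (max τ (tz b2)) < 0; first deduce τ < tz b2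
      have hτtz : τ < tz b2 := by
        by_contra hcon; push_neg at hcon
        have hmτ : max τ (tz b2) = τ := max_eq_left hcon
        rw [hmτ] at hEm
        -- continuity contradiction with E > 0 along the sequence
        have hcw : ContinuousWithinAt (fun t => φ c t - φ b2 t) (Set.Icc t0 t1) τ :=
          ((hcont c).sub (hcont b2)) τ hτm
        have hmem : (fun t => φ c t - φ b2 t) ⁻¹' Set.Iio 0 ∈ nhdsWithin τ (Set.Icc t0 t1) :=
          hcw (Iio_mem_nhds hEm)
        rw [Metric.mem_nhdsWithin_iff] at hmem
        obtain ⟨ε, hε, hball⟩ := hmem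
        obtain ⟨k1, hk1f, hk1gt⟩ := hcinf.exists_gt ⌈(τ - t0)/ε⌉₊
        have hk1c : f k1 = c := hk1f
        have hk2 : (0:ℝ) < (k1:ℝ) + 2 := by positivity
        have hd1 : dist (τ - (τ - t0) / (k1 + 2)) τ < ε := by
          rw [Real.dist_eq]
          have h2 : (τ - t0)/ε ≤ ((⌈(τ - t0)/ε⌉₊ : ℕ) : ℝ) := Nat.le_ceil _
          have h3 : (((⌈(τ - t0)/ε⌉₊ : ℕ)) : ℝ) < (k1:ℝ) := by exact_mod_cast hk1gt
          have h4 : (τ - t0)/ε < (k1:ℝ) + 2 := by linarith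
          have h5 : (τ - t0) < ε * ((k1:ℝ) + 2) := by
            rw [div_lt_iff₀ hε] at h4; linarith
          have h6 : (τ - t0)/((k1:ℝ)+2) < ε := by
            rw [div_lt_iff₀ hk2]; linarith
          have h7 : |τ - (τ - t0) / ((k1:ℝ)+2) - τ| = (τ - t0)/((k1:ℝ)+2) := by
            have h8 : 0 < (τ - t0) / ((k1:ℝ) + 2) := div_pos (by linarith) hk2
            rw [abs_of_nonpos (by linarith)]
            ring
          rw [h7]; exact h6
        have hin : (τ - (τ - t0) / (k1 + 2)) ∈ Metric.ball τ ε ∩ Set.Icc t0 t1 :=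
          ⟨Metric.mem_ball.2 hd1, (htkprop k1).1⟩
        have hcontra := hball hin
        simp only [Set.mem_preimage, Set.mem_Iio] at hcontra
        have := hEk k1 hk1c
        linarith
      have hmtz : max τ (tz b2) = tz b2 := max_eq_right hτtz.le
      have hφb2m0 : φ b2 (max τ (tz b2)) = 0 := by rw [hmtz]; exact htz_zero b2 hb2ne
      have hφb2s2 : 0 < φ b2 s2 := hpos2
      set W : ℝ := (-(φ c s2 - φ b2 s2)) / (φ b2 s2) + 1 with hWW
      have hWpos : 0 < W := by
        rw [hWW]
        have := div_pos (by linarith : (0:ℝ) < -(φ c s2 - φ b2 s2)) hφb2s2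
        linarith
      have hWkey : W * φ b2 s2 = -(φ c s2 - φ b2 s2) + φ b2 s2 := by
        rw [hWW]; field_simp
      clear_value W
      set Z : ℝ := max W ((1 + |φ c p0 - φ b2 p0|
          + W * |φ b2 p0|)
          / (φ (b1 ∪ b2) p0 - φ b2 p0)) with hZZ
      have hZW : W ≤ Z := le_max_left _ _
      have hZpos : 0 < Z := lt_of_lt_of_le hWpos hZW
      have hZkey : 1 + |φ c p0 - φ b2 p0|
          + W * |φ b2 p0|
          ≤ Z * (φ (b1 ∪ b2) p0 - φ b2 p0) := by
        have h1 := le_max_right W ((1 + |φ c p0 - φ b2 p0|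
          + W * |φ b2 p0|)
          / (φ (b1 ∪ b2) p0 - φ b2 p0))
        rw [div_le_iff₀ hGtk] at h1
        rw [← hZZ] at h1
        nlinarith [h1]
      clear_value Z
      have hsc2 := sc_combo' hscd b2 ∅ (b1 ∪ b2) c (a := Z + 1 - W) (b := W) (c := Z) (d := 1)
        (by linarith) hWpos.le hZpos.le zero_le_one (by ring) (by linarith)
      refine sc_kill' hsc2 hp0Icc hmIcc hs2m
        (le_trans hp0lt.le (le_max_left _ _)) hms2 ?_ ?_ ?_
      · show (Z + 1 - W) * φ b2 p0 + W * φ (∅:Bundle n) p0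
            - Z * φ (b1 ∪ b2) p0 - 1 * φ c p0 < 0
        have h0 : W * φ (∅:Bundle n) p0 = 0 := by
          rw [hempty _ hp0Icc]; ring
        have habs1 : -(φ c p0 - φ b2 p0)
            ≤ |φ c p0 - φ b2 p0| := neg_le_abs _
        have habs2 : W * (-(φ b2 p0))
            ≤ W * |φ b2 p0| :=
          mul_le_mul_of_nonneg_left (neg_le_abs _) hWpos.le
        nlinarith [hZkey]
      · show 0 < (Z + 1 - W) * φ b2 (max τ (tz b2)) + W * φ (∅:Bundle n) (max τ (tz b2))
            - Z * φ (b1 ∪ b2) (max τ (tz b2)) - 1 * φ c (max τ (tz b2))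
        have h0 : W * φ (∅:Bundle n) (max τ (tz b2)) = 0 := by rw [hempty _ hmIcc]; ring
        have h1 : (Z + 1 - W) * φ b2 (max τ (tz b2)) = 0 := by rw [hφb2m0]; ring
        have h2 : Z * φ (b1 ∪ b2) (max τ (tz b2)) = 0 := by
          have h3 : φ (b1 ∪ b2) (max τ (tz b2)) = 0 := by
            have := hGm; rw [hφb2m0] at this; linarith
          rw [h3]; ring
        linarith
      · show (Z + 1 - W) * φ b2 s2 + W * φ (∅:Bundle n) s2
            - Z * φ (b1 ∪ b2) s2 - 1 * φ c s2 < 0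
        have h0 : W * φ (∅:Bundle n) s2 = 0 := by rw [hempty _ hs2m]; ring
        have h1 : Z * (φ (b1 ∪ b2) s2 - φ b2 s2) = 0 := by rw [hGs2]; ring
        nlinarith [hWkey]

/-- **Theorem 6 (nested bundling).** Under MD, SCD*, the boundary assumptions,
monotonicity of the top type's valuation in set inclusion, and the union quantity
condition: (i) every minimal optimal menu is nested; and (ii) for any enumeration of
the nonempty bundles ordered by their sold-alone quantities, the menu of prefix unions
(together with ∅) is an optimal menu. -/
theorem stmt10 {n : ℕ} (hn : 1 ≤ n) (t0 t1 : ℝ) (ht : t0 < t1)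
    (φ : Bundle n → ℝ → ℝ)
    (hcont : ∀ b : Bundle n, ContinuousOn (φ b) (Set.Icc t0 t1))
    (hdist : Distinct φ t0 t1)
    (hmd : MD φ t0 t1)
    (hscd : SCDstar φ t0 t1)
    (hempty : ∀ t ∈ Set.Icc t0 t1, φ (∅ : Bundle n) t = 0)
    (hneg : ∀ b : Bundle n, b ≠ ∅ → φ b t0 < 0)
    (hpos : ∀ b : Bundle n, b ≠ ∅ → 0 < φ b t1)
    (tz : Bundle n → ℝ)
    (htz_mem : ∀ b : Bundle n, b ≠ ∅ → tz b ∈ Set.Ioo t0 t1)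
    (htz_zero : ∀ b : Bundle n, b ≠ ∅ → φ b (tz b) = 0)
    (htz_uniq : ∀ b : Bundle n, b ≠ ∅ → ∀ s ∈ Set.Icc t0 t1, φ b s = 0 → s = tz b)
    (hmono : ∀ b b' : Bundle n, b ⊆ b' → φ b t1 ≤ φ b' t1)
    (hunion : ∀ b1 b2 : Bundle n, b1 ≠ ∅ → b2 ≠ ∅ →
      tz (b1 ∪ b2) ≤ max (tz b1) (tz b2)) :
    (∀ S : Finset (Bundle n), MinimalOptimalMenu φ t0 t1 S → IsNestedMenu S) ∧
    (∀ e : ℕ → Bundle n,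
      (∀ i, i < 2 ^ n - 1 → e i ≠ ∅) →
      (∀ b : Bundle n, b ≠ ∅ → ∃ i, i < 2 ^ n - 1 ∧ e i = b) →
      (∀ i j, i < 2 ^ n - 1 → j < 2 ^ n - 1 → e i = e j → i = j) →
      (∀ i j, i ≤ j → j < 2 ^ n - 1 → tz (e i) ≤ tz (e j)) →
      OptimalMenu φ t0 t1
        (insert (∅ : Bundle n)
          ((Finset.range (2 ^ n - 1)).image fun k => (Finset.range (k + 1)).sup e))) := by
  constructor
  · -- part (i)
    intro S hS x hx y hy
    by_contra hcon
    push_neg at hcon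
    obtain ⟨hxy, hyx⟩ := hcon
    rcases le_total (tz x) (tz y) with h | h
    · exact core ht hcont hdist hmd hscd hempty hneg hpos htz_mem htz_zero htz_uniq
        hmono hunion hS hx hy hxy hyx h
    · exact core ht hcont hdist hmd hscd hempty hneg hpos htz_mem htz_zero htz_uniq
        hmono hunion hS hy hx hyx hxy h
  · -- part (ii)
    intro e hne henum _hinj horder
    have hprefix : ∀ j, j < 2 ^ n - 1 →
        ((Finset.range (j+1)).sup e ≠ ∅ ∧ tz ((Finset.range (j+1)).sup e) ≤ tz (e j)) := by
      intro j
      induction j with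
      | zero =>
        intro hj
        have h0 : (Finset.range (0+1)).sup e = e 0 := by
          rw [show (0:ℕ)+1 = 1 from rfl, Finset.range_one, Finset.sup_singleton]
        rw [h0]
        exact ⟨hne 0 hj, le_refl _⟩
      | succ j ih =>
        intro hj
        have hj' : j < 2 ^ n - 1 := by omega
        obtain ⟨ih1, ih2⟩ := ih hj'
        rw [Finset.range_add_one, Finset.sup_insert]
        have hequ : e (j+1) ⊔ (Finset.range (j+1)).sup e
            = e (j+1) ∪ (Finset.range (j+1)).sup e := rfl
        constructor
        · intro hemp
          apply ih1
          have hsub : (Finset.range (j+1)).sup e ⊆ e (j+1) ⊔ (Finset.range (j+1)).sup e :=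
            le_sup_right
          rw [hemp] at hsub
          exact Finset.subset_empty.mp hsub
        · rw [hequ]
          refine le_trans (hunion _ _ (hne _ hj) ih1) ?_
          exact max_le (le_refl _) (le_trans ih2 (horder j (j+1) (by omega) hj))
    intro t htm
    obtain ⟨bstar, _, hbtop⟩ := Finset.exists_max_image Finset.univ (fun b => φ b t)
      ⟨∅, Finset.mem_univ _⟩
    rcases le_or_gt (φ bstar t) 0 with hle | hgt
    · refine ⟨∅, Finset.mem_insert_self _ _, ?_⟩
      intro b'
      rw [hempty t htm]
      exact le_trans (hbtop b' (Finset.mem_univ _)) hle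
    · have hbne : bstar ≠ (∅ : Bundle n) := by
        intro h; rw [h, hempty t htm] at hgt; exact lt_irrefl _ hgt
      obtain ⟨j, hj, hje⟩ := henum bstar hbne
      obtain ⟨hPne, hPtz⟩ := hprefix j hj
      have hjsub : e j ⊆ (Finset.range (j+1)).sup e :=
        Finset.le_sup (Finset.self_mem_range_succ j)
      have htgt : tz (e j) < t := by
        by_contra hcon2; push_neg at hcon2
        have h2 := phi_nonpos ht hmd hempty hneg hpos htz_mem htz_zero (e j) (hne j hj) htm hcon2
        rw [hje] at h2; linarith
      refine ⟨(Finset.range (j+1)).sup e,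
        Finset.mem_insert_of_mem (Finset.mem_image.2 ⟨j, Finset.mem_range.2 hj, rfl⟩), ?_⟩
      intro b'
      have h1 := hbtop b' (Finset.mem_univ _)
      have h2 : φ (e j) t ≤ φ ((Finset.range (j+1)).sup e) t :=
        dom ht hmd hempty hneg hpos htz_mem htz_zero hmono (hne j hj) hPne hjsub hPtz htm htgt.le
      rw [hje] at h2
      linarith

end Paper
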